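/- Under the assumptions 0 < ā² < c² < 1 < a², M̄ > 0, let U(B) be defined by log U(B) = (P₁/P₂) log B + P₃P₄/P₂, where P₁ = log(a²/ā²), P₂ = log(a²c²/ā²), P₃ = log(1/c²), P₄ = log( log(1/ā²)/(M̄ log a²) ), and let F**(y) = ā^{2 s**(y)} y + M̄ (a^{2 s**(y)} − 1) − B with s**(y) = (log y − log B)/log(1/c²). Then the map B ↦ F**(U(B)) is strictly concave on (0, ∞): its second derivative equals −Y(B) log(a²) log(c²/ā²) / (P₂² B²) < 0, where Y(B) = ā^{2 s**(U(B))} U(B) + M̄ a^{2 s**(U(B))}. -/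

import Mathlib

/-- `b^{2s} := exp(2 s log b)` -/
noncomputable def pw (b s : ℝ) : ℝ := Real.exp (2 * s * Real.log b)

/-- `s**(y) = (log y - log B)/log(1/c²)` -/
noncomputable def sstar2 (c B y : ℝ) : ℝ := (Real.log y - Real.log B) / Real.log (1 / c ^ 2)

/-- `F**(y) = ā^{2 s**(y)} y + M̄ (a^{2 s**(y)} - 1) - B` -/
noncomputable def Fstar2 (a abar c M B y : ℝ) : ℝ :=
  pw abar (sstar2 c B y) * y + M * (pw a (sstar2 c B y) - 1) - B

/-- `U(B)`, defined by `log U(B) = (P₁/P₂) log B + P₃P₄/P₂`. -/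
noncomputable def Ufun (a abar c M B : ℝ) : ℝ :=
  Real.exp (Real.log (a ^ 2 / abar ^ 2) / Real.log (a ^ 2 * c ^ 2 / abar ^ 2) * Real.log B +
    Real.log (1 / c ^ 2) * Real.log (Real.log (1 / abar ^ 2) / (M * Real.log (a ^ 2))) /
      Real.log (a ^ 2 * c ^ 2 / abar ^ 2))

/-- `Y(B) = ā^{2 s**(U(B))} U(B) + M̄ a^{2 s**(U(B))}` -/
noncomputable def Yfun (a abar c M B : ℝ) : ℝ :=
  pw abar (sstar2 c B (Ufun a abar c M B)) * Ufun a abar c M B +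
    M * pw a (sstar2 c B (Ufun a abar c M B))

lemma closed_form (a abar c M : ℝ) (ha : 0 < a) (habar : 0 < abar) (hc : 0 < c) (hM : 0 < M)
    (h1 : abar ^ 2 < c ^ 2) (h2 : c ^ 2 < 1) (h3 : 1 < a ^ 2) :
    ∃ K : ℝ, 0 < K ∧
      (∀ B : ℝ, Fstar2 a abar c M B (Ufun a abar c M B) =
        K * Real.exp (Real.log (a ^ 2) / Real.log (a ^ 2 * c ^ 2 / abar ^ 2) * Real.log B) - B - M) ∧
      (∀ B : ℝ, Yfun a abar c M B =
        K * Real.exp (Real.log (a ^ 2) / Real.log (a ^ 2 * c ^ 2 / abar ^ 2) * Real.log B)) := by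
  set α := Real.log (a ^ 2) with hαdef
  set β := Real.log (abar ^ 2) with hβdef
  set γ := Real.log (c ^ 2) with hγdef
  have hα : 0 < α := Real.log_pos h3
  have hγ : γ < 0 := Real.log_neg (by positivity) h2
  have hβγ : β < γ := Real.log_lt_log (by positivity) h1
  have hP₂ : Real.log (a ^ 2 * c ^ 2 / abar ^ 2) = α + γ - β := by
    rw [Real.log_div (by positivity) (by positivity), Real.log_mul (by positivity) (by positivity)]
  have hP₃ : Real.log (1 / c ^ 2) = -γ := by rw [one_div, Real.log_inv]
  have hla : Real.log a = α / 2 := by rw [hαdef, Real.log_pow]; push_cast; ring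
  have hlabar : Real.log abar = β / 2 := by rw [hβdef, Real.log_pow]; push_cast; ring
  have hP₂pos : 0 < α + γ - β := by linarith
  have hγne : γ ≠ 0 := ne_of_lt hγ
  have hP₂ne : α + γ - β ≠ 0 := ne_of_gt hP₂pos
  set k := Real.log (Real.log (1 / abar ^ 2) / (M * α)) with hkdef
  have hP₁ : Real.log (a ^ 2 / abar ^ 2) = α - β := by
    rw [Real.log_div (by positivity) (by positivity)]
  refine ⟨Real.exp ((β - γ) * k / (α + γ - β)) + M * Real.exp (α * k / (α + γ - β)), by positivity,
    ?_, ?_⟩ <;> intro B <;>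
    simp only [Fstar2, Yfun, Ufun, pw, sstar2, Real.log_exp, hP₂, hP₃, hP₁, hla, hlabar, add_mul,
      ← Real.exp_add, mul_assoc, ← hαdef, ← hkdef] <;> generalize Real.log B = l
  all_goals {
    have e1 : 2 * (((α - β) / (α + γ - β) * l + -γ * k / (α + γ - β) - l) / -γ * (β / 2)) +
        ((α - β) / (α + γ - β) * l + -γ * k / (α + γ - β)) =
        (β - γ) * k / (α + γ - β) + α / (α + γ - β) * l := by
      field_simp
      try ring
    have e2 : 2 * (((α - β) / (α + γ - β) * l + -γ * k / (α + γ - β) - l) / -γ * (α / 2)) =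
        α * k / (α + γ - β) + α / (α + γ - β) * l := by
      field_simp
      try ring
    rw [e1, e2]
    try ring }

/-- `B ↦ F**(U(B))` is strictly concave on `(0,∞)`, with the stated negative
second derivative. -/
theorem FstarU_strictly_concave (a abar c M : ℝ)
    (ha : 0 < a) (habar : 0 < abar) (hc : 0 < c) (hM : 0 < M)
    (h1 : abar ^ 2 < c ^ 2) (h2 : c ^ 2 < 1) (h3 : 1 < a ^ 2) :
    StrictConcaveOn ℝ (Set.Ioi (0 : ℝ))
      (fun B : ℝ => Fstar2 a abar c M B (Ufun a abar c M B)) ∧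
    ∀ B : ℝ, 0 < B →
      iteratedDeriv 2 (fun B : ℝ => Fstar2 a abar c M B (Ufun a abar c M B)) B =
        -(Yfun a abar c M B * Real.log (a ^ 2) * Real.log (c ^ 2 / abar ^ 2)) /
          ((Real.log (a ^ 2 * c ^ 2 / abar ^ 2)) ^ 2 * B ^ 2) ∧
      iteratedDeriv 2 (fun B : ℝ => Fstar2 a abar c M B (Ufun a abar c M B)) B < 0 := by
  obtain ⟨K, hK, hF, hY⟩ := closed_form a abar c M ha habar hc hM h1 h2 h3
  have hα : 0 < Real.log (a ^ 2) := Real.log_pos h3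
  have hγ : Real.log (c ^ 2) < 0 := Real.log_neg (by positivity) h2
  have hβγ : Real.log (abar ^ 2) < Real.log (c ^ 2) := Real.log_lt_log (by positivity) h1
  have hP₂ : Real.log (a ^ 2 * c ^ 2 / abar ^ 2) =
      Real.log (a ^ 2) + Real.log (c ^ 2) - Real.log (abar ^ 2) := by
    rw [Real.log_div (by positivity) (by positivity), Real.log_mul (by positivity) (by positivity)]
  have hP₂pos : 0 < Real.log (a ^ 2 * c ^ 2 / abar ^ 2) := by rw [hP₂]; linarith
  have hcb : Real.log (c ^ 2 / abar ^ 2) = Real.log (c ^ 2) - Real.log (abar ^ 2) :=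
    Real.log_div (by positivity) (by positivity)
  set P₂ := Real.log (a ^ 2 * c ^ 2 / abar ^ 2) with hP₂def
  set ρ : ℝ := Real.log (a ^ 2) / P₂ with hρdef
  set g : ℝ → ℝ := fun B => K * Real.exp (ρ * Real.log B) - B - M with hgdef
  have hfg : (fun B : ℝ => Fstar2 a abar c M B (Ufun a abar c M B)) = g := funext hF
  -- derivative facts
  have hE : ∀ B : ℝ, 0 < B → HasDerivAt (fun x : ℝ => Real.exp (ρ * Real.log x))
      (Real.exp (ρ * Real.log B) * (ρ * B⁻¹)) B := fun B hB =>
    ((Real.hasDerivAt_log hB.ne').const_mul ρ).exp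
  have hg1 : ∀ B : ℝ, 0 < B → HasDerivAt g
      (K * (Real.exp (ρ * Real.log B) * (ρ * B⁻¹)) - 1) B := fun B hB =>
    (((hE B hB).const_mul K).sub (hasDerivAt_id' (x := B))).sub_const M
  have hderiv_g : ∀ B : ℝ, 0 < B →
      deriv g B = K * ρ * (Real.exp (ρ * Real.log B) * B⁻¹) - 1 := by
    intro B hB
    rw [(hg1 B hB).deriv]; ring
  have hD2 : ∀ B : ℝ, 0 < B → deriv (deriv g) B =
      K * ρ * ((Real.exp (ρ * Real.log B) * (ρ * B⁻¹)) * B⁻¹ +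
        Real.exp (ρ * Real.log B) * (-(B ^ 2)⁻¹)) := by
    intro B hB
    have heq : (fun x : ℝ => K * ρ * (Real.exp (ρ * Real.log x) * x⁻¹) - 1) =ᶠ[nhds B] deriv g :=
      Filter.eventuallyEq_of_mem (isOpen_Ioi.mem_nhds hB) fun x hx => (hderiv_g x hx).symm
    rw [← heq.deriv_eq]
    exact ((((hE B hB).mul (hasDerivAt_inv hB.ne')).const_mul (K * ρ)).sub_const 1).deriv
  have key : ∀ B : ℝ, 0 < B → deriv (deriv g) B =
      -(Yfun a abar c M B * Real.log (a ^ 2) * Real.log (c ^ 2 / abar ^ 2)) / (P₂ ^ 2 * B ^ 2) := by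
    intro B hB
    rw [hD2 B hB, hY B, hcb, hρdef]
    have hBne : B ≠ 0 := hB.ne'
    have hP₂ne : P₂ ≠ 0 := hP₂pos.ne'
    have hP₂' : P₂ = 2 * Real.log a + 2 * Real.log c - 2 * Real.log abar := by
      rw [hP₂, Real.log_pow, Real.log_pow, Real.log_pow]; push_cast; ring
    field_simp
    linear_combination (-1 : ℝ) * hP₂
  have keyneg : ∀ B : ℝ, 0 < B → deriv (deriv g) B < 0 := by
    intro B hB
    rw [key B hB]
    apply div_neg_of_neg_of_pos
    · rw [neg_lt, neg_zero]
      have hYpos : 0 < Yfun a abar c M B := by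
        rw [hY B]; positivity
      have : 0 < Real.log (c ^ 2 / abar ^ 2) := by rw [hcb]; linarith
      positivity
    · positivity
  constructor
  · rw [hfg]
    refine strictConcaveOn_of_deriv2_neg (convex_Ioi 0) ?_ ?_
    · exact fun x hx => (hg1 x hx).continuousAt.continuousWithinAt
    · intro x hx
      rw [interior_Ioi] at hx
      simpa [Function.iterate_succ_apply, Function.iterate_zero_apply] using keyneg x hx
  · intro B hB
    rw [hfg, iteratedDeriv_succ, iteratedDeriv_one]
    exact ⟨key B hB, keyneg B hB⟩
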